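/- arXiv:0712.3881 — 8 statements merged into one kernel-verified Lean document; each statement's English description precedes it below -/
import Mathlib

section
/- If n×n complex matrices A and B satisfy det(I - sA - tB) = det(I - sA)·det(I - tB) for all scalars s, t, then the algebraic multiplicity of 0 as an eigenvalue of A plus the algebraic multiplicity of 0 as an eigenvalue of B is at least n. -/
open Matrix Polynomial

lemma eval_charpolyRev' {n : ℕ} (M : Matrix (Fin n) (Fin n) ℂ) (t : ℂ) :
    (charpolyRev M).eval t = (1 - t • M).det := by
  rw [charpolyRev, ← coe_evalRingHom, RingHom.map_det]
  congr 1
  ext i j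
  simp only [RingHom.mapMatrix_apply, coe_evalRingHom, Matrix.map_apply, Matrix.sub_apply, Matrix.one_apply, Matrix.smul_apply,
    smul_eq_mul, eval_sub, eval_mul, eval_X, apply_ite (eval t), eval_one, eval_zero, eval_C]

theorem stmt1 (n : ℕ) (A B : Matrix (Fin n) (Fin n) ℂ)
    (hCS : ∀ s t : ℂ, (1 - s • A - t • B).det = (1 - s • A).det * (1 - t • B).det) :
    n ≤ A.charpoly.rootMultiplicity 0 + B.charpoly.rootMultiplicity 0 := by
  have hmul : (A + B).charpolyRev = A.charpolyRev * B.charpolyRev := by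
    apply Polynomial.funext
    intro s
    rw [eval_mul, eval_charpolyRev', eval_charpolyRev', eval_charpolyRev']
    rw [smul_add, ← sub_sub]
    exact hCS s s
  have hA0 : A.charpolyRev ≠ 0 := fun h => by simpa [h] using Matrix.eval_charpolyRev (M := A)
  have hB0 : B.charpolyRev ≠ 0 := fun h => by simpa [h] using Matrix.eval_charpolyRev (M := B)
  have hdeg : A.charpolyRev.natDegree + B.charpolyRev.natDegree
      = (A + B).charpolyRev.natDegree := by
    rw [hmul, natDegree_mul hA0 hB0]
  have hrev : ∀ M : Matrix (Fin n) (Fin n) ℂ,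
      M.charpolyRev.natDegree = n - M.charpoly.rootMultiplicity 0 := by
    intro M
    rw [← Matrix.reverse_charpoly, Polynomial.reverse_natDegree,
      rootMultiplicity_eq_natTrailingDegree', M.charpoly_natDegree_eq_dim, Fintype.card_fin]
  have hle : ∀ M : Matrix (Fin n) (Fin n) ℂ, M.charpoly.rootMultiplicity 0 ≤ n := by
    intro M
    rw [rootMultiplicity_eq_natTrailingDegree']
    exact le_trans (natTrailingDegree_le_natDegree _)
      (le_of_eq (by rw [M.charpoly_natDegree_eq_dim, Fintype.card_fin]))
  have h1 := hrev A; have h2 := hrev B; have h3 := hrev (A + B)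
  have h4 := hle A; have h5 := hle B; have h6 := hle (A + B)
  omega
end

section
/- If n×n complex matrices A and B satisfy det(I - sA - tB) = det(I - sA)·det(I - tB) for all scalars s, t, and A is invertible, then B is nilpotent. -/
open Matrix Polynomial

lemma eval_charpoly_aux (n : ℕ) (M : Matrix (Fin n) (Fin n) ℂ) (r : ℂ) :
    (M.charpoly).eval r = (r • (1 : Matrix (Fin n) (Fin n) ℂ) - M).det := by
  rw [Matrix.charpoly, ← Polynomial.coe_evalRingHom, RingHom.map_det]
  congr 1
  ext i j
  rcases eq_or_ne i j with h | h
  · subst h; simp [charmatrix_apply_eq, Matrix.one_apply]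
  · simp [charmatrix_apply_ne _ _ _ h, Matrix.one_apply_ne h]

theorem stmt2 (n : ℕ) (A B : Matrix (Fin n) (Fin n) ℂ)
    (hCS : ∀ s t : ℂ, (1 - s • A - t • B).det = (1 - s • A).det * (1 - t • B).det)
    (hA : IsUnit A) :
    B ^ n = 0 := by
  have hdet : IsUnit A.det := (Matrix.isUnit_iff_isUnit_det A).mp hA
  have hAAi : A * A⁻¹ = 1 := Matrix.mul_nonsing_inv A hdet
  -- key: det (M - s•A) = (A.det * (-1)^n) * eval s (charpoly (A⁻¹ * M))
  have key : ∀ (M : Matrix (Fin n) (Fin n) ℂ) (s : ℂ),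
      (M - s • A).det = (A.det * (-1 : ℂ) ^ n) * ((A⁻¹ * M).charpoly).eval s := by
    intro M s
    have h1 : M - s • A = A * (A⁻¹ * M - s • 1) := by
      rw [Matrix.mul_sub, ← Matrix.mul_assoc, hAAi, Matrix.one_mul, mul_smul_comm, mul_one]
    have h2 : A⁻¹ * M - s • 1 = -((s • 1 : Matrix (Fin n) (Fin n) ℂ) - A⁻¹ * M) := by
      ext i j; simp [Matrix.neg_apply, Matrix.sub_apply]
    rw [h1, Matrix.det_mul, h2, Matrix.det_neg, eval_charpoly_aux]
    simp [Fintype.card_fin]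
    ring
  have hne : (A.det * (-1 : ℂ) ^ n) ≠ 0 :=
    mul_ne_zero hdet.ne_zero (pow_ne_zero _ (by norm_num))
  -- det (1 - t•B) = 1 for all t
  have hdet1 : ∀ t : ℂ, (1 - t • B).det = 1 := by
    intro t
    have hpoly : (A⁻¹ * (1 - t • B)).charpoly
        = (A⁻¹ * 1).charpoly * C ((1 - t • B).det) := by
      apply Polynomial.funext
      intro s
      have h := hCS s t
      have e1 : (1 : Matrix (Fin n) (Fin n) ℂ) - s • A - t • B = (1 - t • B) - s • A := by
        abel
      have e2 : (1 : Matrix (Fin n) (Fin n) ℂ) - s • A = 1 - s • A := rfl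
      rw [e1, key (1 - t • B) s, key 1 s] at h
      simp only [eval_mul, eval_C]
      apply mul_left_cancel₀ hne
      linear_combination h
    have hlc := congrArg Polynomial.leadingCoeff hpoly
    rw [Polynomial.leadingCoeff_mul, Polynomial.leadingCoeff_C,
      (Matrix.charpoly_monic _).leadingCoeff, (Matrix.charpoly_monic _).leadingCoeff,
      one_mul] at hlc
    exact hlc.symm
  -- charpoly B = X ^ n
  have hcp : B.charpoly = X ^ n := by
    have hz : B.charpoly - X ^ n = 0 := by
      apply Polynomial.eq_zero_of_infinite_isRoot
      apply Set.Infinite.mono (s := {(0 : ℂ)}ᶜ)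
      · intro s hs
        have hs0 : s ≠ 0 := hs
        have hsm : s • (1 : Matrix (Fin n) (Fin n) ℂ) - B = s • (1 - s⁻¹ • B) := by
          rw [smul_sub, smul_smul, mul_inv_cancel₀ hs0, one_smul]
        simp only [Set.mem_setOf_eq, IsRoot, eval_sub, eval_pow, eval_X,
          eval_charpoly_aux, hsm, Matrix.det_smul, Fintype.card_fin, hdet1 s⁻¹,
          mul_one, sub_self]
      · exact (Set.finite_singleton 0).infinite_compl
    exact sub_eq_zero.mp hz
  have := Matrix.aeval_self_charpoly B
  rw [hcp] at this
  simpa using this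
end

section
/- Let A and B be n×n complex matrices with AB = 0. Then det(I - sA - tB) = det(I - sA)·det(I - tB) for all scalars s, t. -/
open Matrix

theorem stmt4 (n : ℕ) (A B : Matrix (Fin n) (Fin n) ℂ) (h : A * B = 0) :
    ∀ s t : ℂ, (1 - s • A - t • B).det = (1 - s • A).det * (1 - t • B).det := by
  intro s t
  have key : (1 - s • A) * (1 - t • B) = 1 - s • A - t • B := by
    have : (s • A) * (t • B) = 0 := by
      rw [smul_mul_smul_comm, h, smul_zero]
    noncomm_ring [this]; simp [h]
  rw [← Matrix.det_mul, key]
end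

section
/- Let A and B be n×n complex matrices such that 0 is a semisimple eigenvalue of both A and B, B maps ker A into itself, and AB = 0. Then ℂⁿ = ker A + ker B. -/
open Matrix

theorem stmt6 (n : ℕ) (A B : Matrix (Fin n) (Fin n) ℂ)
    (hA : LinearMap.ker A.mulVecLin = LinearMap.ker (A * A).mulVecLin)
    (hB : LinearMap.ker B.mulVecLin = LinearMap.ker (B * B).mulVecLin)
    (hinv : ∀ x : Fin n → ℂ, A.mulVec x = 0 → A.mulVec (B.mulVec x) = 0)
    (hAB : A * B = 0) :
    LinearMap.ker A.mulVecLin ⊔ LinearMap.ker B.mulVecLin = ⊤ := by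
  set f := B.mulVecLin with hf
  -- range B ≤ ker A
  have hrange : LinearMap.range f ≤ LinearMap.ker A.mulVecLin := by
    rintro x ⟨y, rfl⟩
    have : A.mulVec (B.mulVec y) = 0 := by
      rw [mulVec_mulVec, hAB, zero_mulVec]
    simpa [hf] using this
  -- ker f ⊓ range f = ⊥
  have hinf : LinearMap.ker f ⊓ LinearMap.range f = ⊥ := by
    apply le_antisymm _ bot_le
    rintro x ⟨hx, y, rfl⟩
    have hy : y ∈ LinearMap.ker (B * B).mulVecLin := by
      simp only [LinearMap.mem_ker, mulVecLin_mul, LinearMap.comp_apply]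
      exact hx
    rw [← hB] at hy
    simpa using hy
  have hsup : LinearMap.ker f ⊔ LinearMap.range f = ⊤ := by
    apply Submodule.eq_top_of_finrank_eq
    have h1 := Submodule.finrank_sup_add_finrank_inf_eq (LinearMap.ker f) (LinearMap.range f)
    rw [hinf, finrank_bot, add_zero] at h1
    have h2 := LinearMap.finrank_range_add_finrank_ker f
    omega
  have : (⊤ : Submodule ℂ (Fin n → ℂ)) ≤ LinearMap.ker A.mulVecLin ⊔ LinearMap.ker f := by
    rw [← hsup, sup_comm]
    exact sup_le_sup_right hrange _
  exact le_antisymm le_top this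
end

section
/- Let A and B be n×n complex matrices such that 0 is a semisimple eigenvalue of both A and B, B maps ker A into itself, and ℂⁿ = ker A + ker B. Then det(I - sA - tB) = det(I - sA)·det(I - tB) for all scalars s, t. -/
open Matrix

/-- If `K ⊔ L = ⊤`, there is a complement of `K` contained in `L`. -/
lemma exists_isCompl_le {V : Type*} [AddCommGroup V] [Module ℂ V]
    (K L : Submodule ℂ V) (h : K ⊔ L = ⊤) :
    ∃ L₁ : Submodule ℂ V, L₁ ≤ L ∧ IsCompl K L₁ := by
  obtain ⟨q, hq⟩ := Submodule.exists_isCompl ((K ⊓ L).comap L.subtype)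
  refine ⟨q.map L.subtype, Submodule.map_subtype_le L q, ?_, ?_⟩
  · -- disjoint
    rw [Submodule.disjoint_def]
    intro x hxK hxq
    obtain ⟨y, hy, rfl⟩ := hxq
    have hy' : y ∈ (K ⊓ L).comap L.subtype := by
      simp only [Submodule.mem_comap, Submodule.coe_subtype, Submodule.mem_inf]
      exact ⟨hxK, y.2⟩
    have := hq.1.le_bot ⟨hy', hy⟩
    simp only [Submodule.mem_bot] at this
    simp [this]
  · -- codisjoint
    rw [codisjoint_iff_le_sup]
    intro x _
    have hx : x ∈ K ⊔ L := h ▸ Submodule.mem_top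
    obtain ⟨k, hk, l, hl, rfl⟩ := Submodule.mem_sup.mp hx
    have : (⟨l, hl⟩ : L) ∈ (K ⊓ L).comap L.subtype ⊔ q := by
      rw [codisjoint_iff.mp hq.2]; trivial
    obtain ⟨m, hm, q', hq', hmq⟩ := Submodule.mem_sup.mp this
    have hl_eq : l = (m : V) + (q' : V) := by
      have := congrArg (L.subtype) hmq
      simpa using this.symm
    rw [hl_eq, ← add_assoc]
    exact Submodule.add_mem_sup (K.add_mem hk (Submodule.mem_comap.mp hm).1)
      (Submodule.mem_map_of_mem hq')

theorem stmt7 (n : ℕ) (A B : Matrix (Fin n) (Fin n) ℂ)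
    (hA : LinearMap.ker A.mulVecLin = LinearMap.ker (A * A).mulVecLin)
    (hB : LinearMap.ker B.mulVecLin = LinearMap.ker (B * B).mulVecLin)
    (hinv : ∀ x : Fin n → ℂ, A.mulVec x = 0 → A.mulVec (B.mulVec x) = 0)
    (hsum : LinearMap.ker A.mulVecLin ⊔ LinearMap.ker B.mulVecLin = ⊤) :
    ∀ s t : ℂ, (1 - s • A - t • B).det = (1 - s • A).det * (1 - t • B).det := by
  intro s t
  set f := A.mulVecLin with hf
  set g := B.mulVecLin with hg
  set K := LinearMap.ker f with hK
  set L := LinearMap.ker g with hL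
  obtain ⟨L₁, hL₁L, hc⟩ := exists_isCompl_le K L hsum
  -- bases
  have : FiniteDimensional ℂ (Fin n → ℂ) := inferInstance
  let bK := Module.finBasis ℂ K
  let bL := Module.finBasis ℂ L₁
  let e := Submodule.prodEquivOfIsCompl K L₁ hc
  let b : Module.Basis (Fin (Module.finrank ℂ K) ⊕ Fin (Module.finrank ℂ L₁)) ℂ (Fin n → ℂ) :=
    (bK.prod bL).map e
  -- basic facts about b
  have hb_inl : ∀ j, b (Sum.inl j) = (bK j : Fin n → ℂ) := by
    intro j
    simp only [b, Module.Basis.map_apply, Module.Basis.prod_apply, Sum.elim_inl, Function.comp_apply]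
    rw [show e _ = _ from Submodule.coe_prodEquivOfIsCompl' K L₁ hc _]
    simp
  have hb_inr : ∀ j, b (Sum.inr j) = (bL j : Fin n → ℂ) := by
    intro j
    simp only [b, Module.Basis.map_apply, Module.Basis.prod_apply, Sum.elim_inr, Function.comp_apply]
    rw [show e _ = _ from Submodule.coe_prodEquivOfIsCompl' K L₁ hc _]
    simp
  have hrepr_inr : ∀ x ∈ K, ∀ i, b.repr x (Sum.inr i) = 0 := by
    intro x hx i
    have : b.repr x = (bK.prod bL).repr (e.symm x) := by
      simp [b, Module.Basis.map_repr]
    rw [this, Module.Basis.prod_repr_inr]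
    rw [(Submodule.prodEquivOfIsCompl_symm_apply_snd_eq_zero K L₁ hc).mpr hx]
    simp
  -- endomorphisms
  set f' : (Fin n → ℂ) →ₗ[ℂ] (Fin n → ℂ) := 1 - s • f with hf'
  set g' : (Fin n → ℂ) →ₗ[ℂ] (Fin n → ℂ) := 1 - t • g with hg'
  set φ : (Fin n → ℂ) →ₗ[ℂ] (Fin n → ℂ) := 1 - s • f - t • g with hφ
  -- action facts
  have hfK : ∀ x ∈ K, f x = 0 := fun x hx => hx
  have hgL : ∀ x ∈ L₁, g x = 0 := fun x hx => hL₁L hx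
  have hgK : ∀ x ∈ K, g x ∈ K := by
    intro x hx
    exact hinv x hx
  have hφK : ∀ x ∈ K, φ x ∈ K := by
    intro x hx
    simp only [hφ, LinearMap.sub_apply, LinearMap.smul_apply, Module.End.one_apply]
    rw [hfK x hx]
    exact K.sub_mem (K.sub_mem hx (by simp)) (K.smul_mem t (hgK x hx))
  have hφg' : ∀ x ∈ K, φ x = g' x := by
    intro x hx
    simp only [hφ, hg', LinearMap.sub_apply, LinearMap.smul_apply, Module.End.one_apply]
    rw [hfK x hx]
    simp
  have hφf' : ∀ x ∈ L₁, φ x = f' x := by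
    intro x hx
    simp only [hφ, hf', LinearMap.sub_apply, LinearMap.smul_apply, Module.End.one_apply]
    rw [hgL x hx]
    simp
  have hf'K : ∀ x ∈ K, f' x = x := by
    intro x hx
    simp only [hf', LinearMap.sub_apply, LinearMap.smul_apply, Module.End.one_apply]
    rw [hfK x hx]; simp
  have hg'L : ∀ x ∈ L₁, g' x = x := by
    intro x hx
    simp only [hg', LinearMap.sub_apply, LinearMap.smul_apply, Module.End.one_apply]
    rw [hgL x hx]; simp
  have hg'K : ∀ x ∈ K, g' x ∈ K := by
    intro x hx
    simp only [hg', LinearMap.sub_apply, LinearMap.smul_apply, Module.End.one_apply]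
    exact K.sub_mem hx (K.smul_mem t (hgK x hx))
  -- matrices
  set Mφ := LinearMap.toMatrix b b φ with hMφ
  set Mf := LinearMap.toMatrix b b f' with hMf
  set Mg := LinearMap.toMatrix b b g' with hMg
  -- block₂₁ is zero for maps preserving K
  have hblock21 : ∀ (ψ : (Fin n → ℂ) →ₗ[ℂ] (Fin n → ℂ)), (∀ x ∈ K, ψ x ∈ K) →
      (LinearMap.toMatrix b b ψ).toBlocks₂₁ = 0 := by
    intro ψ hψ
    ext i j
    simp only [Matrix.toBlocks₂₁, Matrix.of_apply, Matrix.zero_apply]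
    rw [LinearMap.toMatrix_apply]
    exact hrepr_inr _ (hψ _ (hb_inl j ▸ (bK j).2)) i
  -- column equalities
  have hcol_inl : ∀ (ψ χ : (Fin n → ℂ) →ₗ[ℂ] (Fin n → ℂ)), (∀ x ∈ K, ψ x = χ x) →
      ∀ r j, (LinearMap.toMatrix b b ψ) r (Sum.inl j) = (LinearMap.toMatrix b b χ) r (Sum.inl j) := by
    intro ψ χ h r j
    rw [LinearMap.toMatrix_apply, LinearMap.toMatrix_apply,
      h _ (hb_inl j ▸ (bK j).2)]
  have hcol_inr : ∀ (ψ χ : (Fin n → ℂ) →ₗ[ℂ] (Fin n → ℂ)), (∀ x ∈ L₁, ψ x = χ x) →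
      ∀ r j, (LinearMap.toMatrix b b ψ) r (Sum.inr j) = (LinearMap.toMatrix b b χ) r (Sum.inr j) := by
    intro ψ χ h r j
    rw [LinearMap.toMatrix_apply, LinearMap.toMatrix_apply,
      h _ (hb_inr j ▸ (bL j).2)]
  -- identity blocks
  have hid : LinearMap.toMatrix b b (1 : (Fin n → ℂ) →ₗ[ℂ] (Fin n → ℂ)) = 1 := by
    simp [LinearMap.toMatrix_one]
  -- determinants via blocks
  have hdet_block : ∀ (M : Matrix (Fin (Module.finrank ℂ K) ⊕ Fin (Module.finrank ℂ L₁))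
      (Fin (Module.finrank ℂ K) ⊕ Fin (Module.finrank ℂ L₁)) ℂ), M.toBlocks₂₁ = 0 →
      M.det = M.toBlocks₁₁.det * M.toBlocks₂₂.det := by
    intro M h0
    conv_lhs => rw [← Matrix.fromBlocks_toBlocks M, h0]
    exact Matrix.det_fromBlocks_zero₂₁ _ _ _
  -- block equalities
  have h11 : Mφ.toBlocks₁₁ = Mg.toBlocks₁₁ := by
    ext i j
    exact hcol_inl φ g' hφg' (Sum.inl i) j
  have h21φ : Mφ.toBlocks₂₁ = 0 := hblock21 φ hφK
  have h22 : Mφ.toBlocks₂₂ = Mf.toBlocks₂₂ := by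
    ext i j
    exact hcol_inr φ f' hφf' (Sum.inr i) j
  have h21f : Mf.toBlocks₂₁ = 0 := hblock21 f' (fun x hx => by rw [hf'K x hx]; exact hx)
  have h11f : Mf.toBlocks₁₁ = 1 := by
    ext i j
    have := hcol_inl f' 1 (fun x hx => by rw [hf'K x hx]; rfl) (Sum.inl i) j
    simp only [Matrix.toBlocks₁₁, Matrix.of_apply]
    rw [hMf, this, hid]
    simp [Matrix.one_apply, Sum.inl.injEq]
  have h21g : Mg.toBlocks₂₁ = 0 := hblock21 g' hg'K
  have h22g : Mg.toBlocks₂₂ = 1 := by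
    ext i j
    have := hcol_inr g' 1 (fun x hx => by rw [hg'L x hx]; rfl) (Sum.inr i) j
    simp only [Matrix.toBlocks₂₂, Matrix.of_apply]
    rw [hMg, this, hid]
    simp [Matrix.one_apply, Sum.inr.injEq]
  -- put together
  have hdφ : Mφ.det = Mg.toBlocks₁₁.det * Mf.toBlocks₂₂.det := by
    rw [hdet_block Mφ h21φ, h11, h22]
  have hdf : Mf.det = Mf.toBlocks₂₂.det := by
    rw [hdet_block Mf h21f, h11f, Matrix.det_one, one_mul]
  have hdg : Mg.det = Mg.toBlocks₁₁.det := by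
    rw [hdet_block Mg h21g, h22g, Matrix.det_one, mul_one]
  -- convert matrix det to linear map det
  have key : ∀ (C : Matrix (Fin n) (Fin n) ℂ), C.det = LinearMap.det C.mulVecLin := by
    intro C
    rw [← Matrix.toLin'_apply' C, LinearMap.det_toLin']
  have hmulA : (1 - s • A - t • B).mulVecLin = φ := by
    ext x
    simp [hφ, hf, hg, Matrix.mulVecLin_apply, Matrix.sub_mulVec, Matrix.smul_mulVec,
      Matrix.one_mulVec, Matrix.one_apply, Pi.single_apply, eq_comm]
  have hmulf : (1 - s • A).mulVecLin = f' := by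
    ext x
    simp [hf', hf, Matrix.mulVecLin_apply, Matrix.sub_mulVec, Matrix.smul_mulVec,
      Matrix.one_mulVec, Matrix.one_apply, Pi.single_apply, eq_comm]
  have hmulg : (1 - t • B).mulVecLin = g' := by
    ext x
    simp [hg', hg, Matrix.mulVecLin_apply, Matrix.sub_mulVec, Matrix.smul_mulVec,
      Matrix.one_mulVec, Matrix.one_apply, Pi.single_apply, eq_comm]
  rw [key, key, key, hmulA, hmulf, hmulg,
    ← LinearMap.det_toMatrix b φ, ← LinearMap.det_toMatrix b f', ← LinearMap.det_toMatrix b g',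
    ← hMφ, ← hMf, ← hMg, hdφ, hdf, hdg]
  ring
end

section
/- Let A and B be n×n complex matrices such that 0 is a semisimple eigenvalue of A and B with ℂⁿ = ker A + ker B, and suppose that for every nonzero eigenvalue λ of A, the generalized eigenspace E_A(λ) ⊆ ker B. Then A and B satisfy det(I - sA - tB) = det(I - sA)·det(I - tB) for all s, t ∈ ℂ. -/
open Matrix

lemma aux_toLinAlgEquiv'_eq_mulVecLin {n : ℕ} (M : Matrix (Fin n) (Fin n) ℂ) :
    Matrix.toLinAlgEquiv' M = M.mulVecLin := by
  ext v
  simp [Matrix.toLinAlgEquiv'_apply, Matrix.mulVecLin_apply]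

theorem stmt9 (n : ℕ) (A B : Matrix (Fin n) (Fin n) ℂ)
    (hA : LinearMap.ker A.mulVecLin = LinearMap.ker (A * A).mulVecLin)
    (hB : LinearMap.ker B.mulVecLin = LinearMap.ker (B * B).mulVecLin)
    (hsum : LinearMap.ker A.mulVecLin ⊔ LinearMap.ker B.mulVecLin = ⊤)
    (hgen : ∀ lam : ℂ, lam ≠ 0 → lam ∈ spectrum ℂ A →
      LinearMap.ker ((A - lam • 1) ^ n).mulVecLin ≤ LinearMap.ker B.mulVecLin) :
    ∀ s t : ℂ, (1 - s • A - t • B).det = (1 - s • A).det * (1 - t • B).det := by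
  -- Let f be the endomorphism of ℂⁿ given by A.
  set f : Module.End ℂ (Fin n → ℂ) := A.mulVecLin with hf
  have hfA : Matrix.toLinAlgEquiv' A = f := aux_toLinAlgEquiv'_eq_mulVecLin A
  -- finrank of the space is n
  have hfin : Module.finrank ℂ (Fin n → ℂ) = n := by simp
  -- ker f = ker f^2
  have hker2 : LinearMap.ker f = LinearMap.ker (f ^ 2) := by
    rw [hA]
    congr 1
    rw [sq, Matrix.mulVecLin_mul]
    rfl
  -- ker f^n ≤ ker f
  have hkerpow : LinearMap.ker (f ^ n) ≤ LinearMap.ker f := by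
    cases n with
    | zero =>
      intro x _
      simp only [LinearMap.mem_ker]
      exact Subsingleton.elim _ _
    | succ m =>
      have h1 : LinearMap.ker (f ^ 1) = LinearMap.ker (f ^ (1 + m)) :=
        Module.End.ker_pow_constant (by simpa [pow_succ, sq] using hker2) m
      rw [add_comm 1 m] at h1
      rw [← h1, pow_one]
  -- key: f maps every max generalized eigenspace into ker B
  have key : ∀ μ : ℂ, Submodule.map f (f.maxGenEigenspace μ) ≤ LinearMap.ker B.mulVecLin := by
    intro μ
    have hmax : f.maxGenEigenspace μ = LinearMap.ker ((f - μ • 1) ^ n) := by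
      rw [Module.End.maxGenEigenspace_eq_genEigenspace_finrank, hfin,
        Module.End.genEigenspace_nat]
    by_cases hμ : μ = 0
    · subst hμ
      rintro x ⟨y, hy, rfl⟩
      have : y ∈ LinearMap.ker (f ^ n) := by
        rw [hmax] at hy; simpa using hy
      have hy0 : f y = 0 := hkerpow this
      simp [hy0]
    · rcases eq_or_ne (f.maxGenEigenspace μ) ⊥ with hbot | hne
      · rw [hbot, Submodule.map_bot]; exact bot_le
      · -- μ is an eigenvalue of f, hence in spectrum of A
        have hev : f.HasEigenvalue μ := by
          apply Module.End.hasEigenvalue_of_hasGenEigenvalue (k := n)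
          show f.genEigenspace μ (n : ℕ∞) ≠ ⊥
          rw [Module.End.genEigenspace_nat, ← hmax]
          exact hne
        have hspec : μ ∈ spectrum ℂ A := by
          have := Module.End.hasEigenvalue_iff_mem_spectrum.mp hev
          rwa [← hfA, AlgEquiv.spectrum_eq] at this
        have hsub : f.maxGenEigenspace μ ≤ LinearMap.ker B.mulVecLin := by
          rw [hmax]
          have h1 : Matrix.toLinAlgEquiv' ((μ : ℂ) • (1 : Matrix (Fin n) (Fin n) ℂ)) = μ • 1 := by
            rw [_root_.map_smul, _root_.map_one]
          have : ((A - μ • 1) ^ n).mulVecLin = (f - μ • 1) ^ n := by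
            rw [← hfA, ← aux_toLinAlgEquiv'_eq_mulVecLin, map_pow, map_sub, h1]
          rw [← this]
          exact hgen μ hμ hspec
        have hmapsto := Module.End.mapsTo_maxGenEigenspace_of_comm (Commute.refl f) μ
        rintro x ⟨y, hy, rfl⟩
        exact hsub (hmapsto hy)
  -- hence B * A = 0
  have hBA : B * A = 0 := by
    have htop : ⨆ μ : ℂ, f.maxGenEigenspace μ = ⊤ :=
      Module.End.iSup_maxGenEigenspace_eq_top f
    have hrange : LinearMap.range f ≤ LinearMap.ker B.mulVecLin := by
      rw [← Submodule.map_top, ← htop, Submodule.map_iSup]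
      exact iSup_le key
    have hv : ∀ v, B.mulVec (A.mulVec v) = 0 := by
      intro v
      have : A.mulVec v ∈ LinearMap.range f := ⟨v, rfl⟩
      simpa using hrange this
    apply Matrix.toLinAlgEquiv'.injective
    rw [map_zero, aux_toLinAlgEquiv'_eq_mulVecLin]
    apply LinearMap.ext
    intro v
    rw [Matrix.mulVecLin_apply, ← Matrix.mulVec_mulVec]
    simpa using hv v
  -- finish
  intro s t
  have hfactor : (1 - t • B) * (1 - s • A) = 1 - s • A - t • B := by
    have : (t • B) * (s • A) = 0 := by
      rw [Matrix.smul_mul, Matrix.mul_smul, hBA]; simp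
    rw [sub_mul, one_mul, mul_sub, mul_one, this, sub_zero]
  calc (1 - s • A - t • B).det = ((1 - t • B) * (1 - s • A)).det := by rw [hfactor]
    _ = (1 - s • A).det * (1 - t • B).det := by rw [Matrix.det_mul, mul_comm]
end

section
/- Let A and B be n×n complex matrices such that B(ker A) ⊆ ker A, 0 is a semisimple eigenvalue of both A and B, ℂⁿ = ker A + ker B, and for each nonzero eigenvalue λ of A the generalized eigenspace E_A(λ) is contained in ker B. Then for each nonzero eigenvalue μ of B, the generalized eigenspace E_B(μ) is contained in ker A. -/
open Matrix

theorem stmt15 (n : ℕ) (A B : Matrix (Fin n) (Fin n) ℂ)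
    (hinv : ∀ x : Fin n → ℂ, A.mulVec x = 0 → A.mulVec (B.mulVec x) = 0)
    (hA : LinearMap.ker A.mulVecLin = LinearMap.ker (A * A).mulVecLin)
    (hB : LinearMap.ker B.mulVecLin = LinearMap.ker (B * B).mulVecLin)
    (hsum : LinearMap.ker A.mulVecLin ⊔ LinearMap.ker B.mulVecLin = ⊤)
    (hgen : ∀ lam : ℂ, lam ≠ 0 → lam ∈ spectrum ℂ A →
      LinearMap.ker ((A - lam • 1) ^ n).mulVecLin ≤ LinearMap.ker B.mulVecLin) :
    ∀ mu : ℂ, mu ≠ 0 → mu ∈ spectrum ℂ B →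
      LinearMap.ker ((B - mu • 1) ^ n).mulVecLin ≤ LinearMap.ker A.mulVecLin := by
  intro mu hmu _ x hx
  rw [LinearMap.mem_ker, mulVecLin_apply] at hx
  -- decompose x = u + v
  have hx' : x ∈ LinearMap.ker A.mulVecLin ⊔ LinearMap.ker B.mulVecLin := by
    rw [hsum]; trivial
  obtain ⟨u, hu, v, hv, huv⟩ := Submodule.mem_sup.mp hx'
  rw [LinearMap.mem_ker, mulVecLin_apply] at hu hv
  -- step on single application
  have hstep : ∀ w : Fin n → ℂ, A.mulVec w = 0 →
      A.mulVec ((B - mu • 1).mulVec w) = 0 := by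
    intro w hw
    rw [sub_mulVec, smul_mulVec, one_mulVec, mulVec_sub,
      mulVec_smul, hinv w hw, hw, smul_zero, sub_zero]
  -- (B - μ)^k u ∈ ker A
  have hpowu : ∀ k : ℕ, A.mulVec (((B - mu • 1) ^ k).mulVec u) = 0 := by
    intro k
    induction k with
    | zero => simpa using hu
    | succ k ih =>
      rw [pow_succ', ← mulVec_mulVec]
      exact hstep _ ih
  -- (B - μ)^k v = (-μ)^k v
  have hpowv : ∀ k : ℕ, ((B - mu • 1) ^ k).mulVec v = (-mu) ^ k • v := by
    intro k
    induction k with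
    | zero => simp
    | succ k ih =>
      rw [pow_succ', ← mulVec_mulVec, ih, mulVec_smul, sub_mulVec,
        smul_mulVec, one_mulVec, hv, zero_sub, pow_succ']
      module
  -- (B - μ)^n x = 0 gives (-μ)^n v ∈ ker A
  have hxeq : ((B - mu • 1) ^ n).mulVec u + (-mu) ^ n • v = 0 := by
    rw [← hpowv n, ← mulVec_add, huv, hx]
  have hAv : A.mulVec v = 0 := by
    have h1 : A.mulVec ((-mu) ^ n • v) = 0 := by
      have : (-mu) ^ n • v = -(((B - mu • 1) ^ n).mulVec u) := by
        linear_combination (norm := module) hxeq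
      rw [this, mulVec_neg, hpowu n, neg_zero]
    rw [mulVec_smul] at h1
    have hne : (-mu) ^ n ≠ 0 := pow_ne_zero _ (neg_ne_zero.mpr hmu)
    exact (smul_eq_zero.mp h1).resolve_left hne
  rw [LinearMap.mem_ker, mulVecLin_apply, ← huv, mulVec_add, hu, hAv, add_zero]
end

section
/- Let A and B be n×n normal complex matrices. Then det(I - sA - tB) = det(I - sA)·det(I - tB) for all s, t ∈ ℂ if and only if AB = 0. -/
open Matrix Polynomial Complex BigOperators Finset

-- Frobenius trace formula
lemma frob {n : ℕ} (X : Matrix (Fin n) (Fin n) ℂ) :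
    (X * Xᴴ).trace = ((∑ i, ∑ j, Complex.normSq (X i j) : ℝ) : ℂ) := by
  rw [Matrix.trace]
  push_cast
  refine Finset.sum_congr rfl fun i _ => ?_
  simp only [Matrix.diag_apply, Matrix.mul_apply, Matrix.conjTranspose_apply]
  refine Finset.sum_congr rfl fun j _ => ?_
  rw [show star (X i j) = (starRingEnd ℂ) (X i j) from rfl, Complex.mul_conj]

lemma frob_zero {n : ℕ} {X : Matrix (Fin n) (Fin n) ℂ} (h : (X * Xᴴ).trace = 0) : X = 0 := by
  rw [frob] at h
  have h' : (∑ i, ∑ j, Complex.normSq (X i j) : ℝ) = 0 := by exact_mod_cast h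
  ext i j
  have h1 : ∀ i ∈ Finset.univ (α := Fin n), (0:ℝ) ≤ ∑ j, Complex.normSq (X i j) :=
    fun i _ => Finset.sum_nonneg fun j _ => Complex.normSq_nonneg _
  have h2 := (Finset.sum_eq_zero_iff_of_nonneg h1).mp h' i (Finset.mem_univ i)
  have h3 := (Finset.sum_eq_zero_iff_of_nonneg (fun j _ => Complex.normSq_nonneg (X i j))).mp h2 j
    (Finset.mem_univ j)
  simpa using Complex.normSq_eq_zero.mp h3

lemma star_self_eq_normSq (x : ℂ) : x * star x = (Complex.normSq x : ℂ) := by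
  rw [show star x = (starRingEnd ℂ) x from rfl, Complex.mul_conj]

lemma tri_normal_diag {n : ℕ} {T : Matrix (Fin n) (Fin n) ℂ}
    (htri : ∀ i j : Fin n, (j : ℕ) < (i : ℕ) → T i j = 0)
    (hn : T * Tᴴ = Tᴴ * T) : ∀ i j : Fin n, i ≠ j → T i j = 0 := by
  have KEY : ∀ m : ℕ, ∀ i j : Fin n, (i : ℕ) = m → (i : ℕ) < (j : ℕ) → T i j = 0 := by
    intro m
    induction m using Nat.strong_induction_on with
    | _ m ih =>
      intro i j him hij
      have hd := congrFun (congrFun hn i) i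
      simp only [Matrix.mul_apply, Matrix.conjTranspose_apply] at hd
      have hd1 : ∑ k, T i k * star (T i k) = ((∑ k, Complex.normSq (T i k) : ℝ) : ℂ) := by
        push_cast
        exact Finset.sum_congr rfl fun k _ => star_self_eq_normSq _
      have hd2 : ∑ k, star (T k i) * T k i = ((∑ k, Complex.normSq (T k i) : ℝ) : ℂ) := by
        push_cast
        exact Finset.sum_congr rfl fun k _ => by rw [mul_comm]; exact star_self_eq_normSq _
      rw [hd1, hd2] at hd
      have hd' : ∑ k, Complex.normSq (T i k) = ∑ k, Complex.normSq (T k i) :=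
        Complex.ofReal_inj.mp hd
      have hrhs : ∑ k, Complex.normSq (T k i) = Complex.normSq (T i i) := by
        rw [Finset.sum_eq_single i]
        · intro k _ hk
          have hkv : (k : ℕ) ≠ (i : ℕ) := fun h => hk (Fin.ext h)
          rcases lt_or_gt_of_ne hkv with h | h
          · rw [ih (k : ℕ) (him ▸ h) k i rfl h, Complex.normSq_zero]
          · rw [htri k i h, Complex.normSq_zero]
        · intro h; exact absurd (Finset.mem_univ i) h
      rw [hrhs] at hd'
      have herase : ∑ k ∈ Finset.univ.erase i, Complex.normSq (T i k) = 0 := by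
        have := Finset.add_sum_erase Finset.univ (fun k => Complex.normSq (T i k))
          (Finset.mem_univ i)
        linarith [this, hd']
      have hj : j ∈ Finset.univ.erase i := by
        refine Finset.mem_erase.mpr ⟨?_, Finset.mem_univ j⟩
        exact fun h => absurd hij (by rw [h]; exact lt_irrefl _)
      have := (Finset.sum_eq_zero_iff_of_nonneg
        (fun k _ => Complex.normSq_nonneg (T i k))).mp herase j hj
      exact Complex.normSq_eq_zero.mp this
  intro i j hne
  have hv : (i : ℕ) ≠ (j : ℕ) := fun h => hne (Fin.ext h)
  rcases lt_or_gt_of_ne hv with h | h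
  · exact KEY (i : ℕ) i j rfl h
  · exact htri i j h

section helpers
variable {n : ℕ} {U T M : Matrix (Fin n) (Fin n) ℂ}

lemma conj_mul_conjT (hU : Uᴴ * U = 1) (hM : M = U * T * Uᴴ) :
    M * Mᴴ = U * (T * Tᴴ) * Uᴴ := by
  subst hM
  simp only [Matrix.conjTranspose_mul, Matrix.conjTranspose_conjTranspose]
  have h : U * T * Uᴴ * (Uᴴᴴ * (U * T)ᴴ) = U * T * (Uᴴ * U) * Tᴴ * Uᴴ := by
    simp only [Matrix.conjTranspose_mul, Matrix.conjTranspose_conjTranspose, Matrix.mul_assoc]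
  simpa [Matrix.mul_assoc, hU] using h.trans (by rw [hU]; simp [Matrix.mul_assoc])

lemma trace_unitary_conj (hU : Uᴴ * U = 1) (X : Matrix (Fin n) (Fin n) ℂ) :
    (U * X * Uᴴ).trace = X.trace := by
  rw [Matrix.trace_mul_cycle, hU, Matrix.one_mul]

lemma mul_self_conj (hU : Uᴴ * U = 1) (hM : M = U * T * Uᴴ) :
    M * M = U * (T * T) * Uᴴ := by
  subst hM
  have : U * T * Uᴴ * (U * T * Uᴴ) = U * T * (Uᴴ * U) * T * Uᴴ := by
    simp only [Matrix.mul_assoc]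
  rw [this, hU, Matrix.mul_one]
  simp only [Matrix.mul_assoc]

lemma conj_one_sub_smul (hU : Uᴴ * U = 1) (hM : M = U * T * Uᴴ) (s : ℂ) :
    1 - s • M = U * (1 - s • T) * Uᴴ := by
  have hUU : U * Uᴴ = 1 := mul_eq_one_comm.mp hU
  rw [hM, Matrix.mul_sub, Matrix.sub_mul, Matrix.mul_one, hUU]
  congr 1
  rw [Matrix.mul_smul, Matrix.smul_mul]

lemma conj_smul_one_sub (hU : Uᴴ * U = 1) (hM : M = U * T * Uᴴ) (x : ℂ) :
    x • (1 : Matrix (Fin n) (Fin n) ℂ) - M = U * (x • 1 - T) * Uᴴ := by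
  have hUU : U * Uᴴ = 1 := mul_eq_one_comm.mp hU
  rw [hM, Matrix.mul_sub, Matrix.sub_mul]
  congr 1
  rw [Matrix.mul_smul, Matrix.smul_mul, Matrix.mul_one, hUU]

lemma det_unitary_conj (hU : Uᴴ * U = 1) (X : Matrix (Fin n) (Fin n) ℂ) :
    (U * X * Uᴴ).det = X.det := by
  have hUU : U * Uᴴ = 1 := mul_eq_one_comm.mp hU
  rw [Matrix.det_mul, Matrix.det_mul]
  have h1 : U.det * Uᴴ.det = 1 := by rw [← Matrix.det_mul, hUU, Matrix.det_one]
  calc U.det * X.det * Uᴴ.det = (U.det * Uᴴ.det) * X.det := by ring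
  _ = X.det := by rw [h1, one_mul]

lemma det_tri (htri : ∀ i j : Fin n, (j : ℕ) < (i : ℕ) → T i j = 0) :
    T.det = ∏ i, T i i := by
  apply Matrix.det_of_upperTriangular
  intro i j hij
  exact htri i j hij

lemma det_one_sub_smul_tri (hU : Uᴴ * U = 1) (hM : M = U * T * Uᴴ)
    (htri : ∀ i j : Fin n, (j : ℕ) < (i : ℕ) → T i j = 0) (s : ℂ) :
    (1 - s • M).det = ∏ i, (1 - s * T i i) := by
  rw [conj_one_sub_smul hU hM s, det_unitary_conj hU]
  rw [det_tri (T := 1 - s • T) ?_]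
  · exact Finset.prod_congr rfl fun i _ => by
      simp [Matrix.sub_apply, Matrix.smul_apply, Matrix.one_apply]
  · intro i j hij
    have hne : i ≠ j := fun h => by omega
    simp [Matrix.sub_apply, Matrix.smul_apply, Matrix.one_apply_ne hne,
      htri i j hij]

lemma det_smul_one_sub_tri (hU : Uᴴ * U = 1) (hM : M = U * T * Uᴴ)
    (htri : ∀ i j : Fin n, (j : ℕ) < (i : ℕ) → T i j = 0) (x : ℂ) :
    (x • (1 : Matrix (Fin n) (Fin n) ℂ) - M).det = ∏ i, (x - T i i) := by
  rw [conj_smul_one_sub hU hM x, det_unitary_conj hU]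
  rw [det_tri (T := x • 1 - T) ?_]
  · exact Finset.prod_congr rfl fun i _ => by
      simp [Matrix.sub_apply, Matrix.smul_apply, Matrix.one_apply]
  · intro i j hij
    have hne : i ≠ j := fun h => by omega
    simp [Matrix.sub_apply, Matrix.smul_apply, Matrix.one_apply_ne hne,
      htri i j hij]

end helpers

theorem schur_tri : ∀ (n : ℕ) (M : Matrix (Fin n) (Fin n) ℂ),
    ∃ U T : Matrix (Fin n) (Fin n) ℂ,
      Uᴴ * U = 1 ∧ (∀ i j : Fin n, (j : ℕ) < (i : ℕ) → T i j = 0) ∧ M = U * T * Uᴴ := by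
  intro n
  induction n with
  | zero =>
    intro M
    exact ⟨1, M, by simp, fun i _ _ => i.elim0, by simp⟩
  | succ n IH =>
    intro M
    -- eigenvalue
    have hdeg : (M.charpoly).degree ≠ 0 := by
      rw [Matrix.charpoly_degree_eq_dim, Fintype.card_fin]
      exact_mod_cast Nat.succ_ne_zero n
    obtain ⟨μ, hμ⟩ := Complex.isAlgClosed.exists_root M.charpoly hdeg
    have hmap : (charmatrix M).map (evalRingHom μ) = μ • (1 : Matrix (Fin (n+1)) (Fin (n+1)) ℂ) - M := by
      ext i j
      by_cases hij : i = j
      · subst hij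
        simp [charmatrix_apply_eq, Matrix.one_apply, Matrix.smul_apply]
      · simp [charmatrix_apply_ne _ _ _ hij, Matrix.one_apply_ne hij, Matrix.smul_apply]
    have hdet : (μ • (1 : Matrix (Fin (n+1)) (Fin (n+1)) ℂ) - M).det = 0 := by
      rw [← hmap, ← RingHom.mapMatrix_apply, ← RingHom.map_det]
      exact hμ
    obtain ⟨v, hv0, hv⟩ := (Matrix.exists_mulVec_eq_zero_iff).mpr hdet
    have hMv : M *ᵥ v = μ • v := by
      have h1 : (μ • (1 : Matrix (Fin (n+1)) (Fin (n+1)) ℂ) - M) *ᵥ v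
          = μ • v - M *ᵥ v := by
        rw [Matrix.sub_mulVec, Matrix.smul_mulVec, Matrix.one_mulVec]
      rw [h1] at hv
      linear_combination (norm := module) -hv
    -- orthonormal basis with first column an eigenvector
    set vE : EuclideanSpace ℂ (Fin (n+1)) := WithLp.toLp 2 v with hvEdef
    have hvE : vE ≠ 0 := fun h => hv0 (by simpa [hvEdef] using congrArg WithLp.ofLp h)
    set c : ℂ := ((‖vE‖ : ℂ))⁻¹ with hc
    set w : EuclideanSpace ℂ (Fin (n+1)) := c • vE with hw
    have hnw : ‖w‖ = 1 := by
      rw [hw, norm_smul, hc]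
      have h0 : ‖vE‖ ≠ 0 := norm_ne_zero_iff.mpr hvE
      rw [norm_inv]
      simp [Complex.norm_real]
      field_simp
    have hON : Orthonormal ℂ (Set.restrict {(0 : Fin (n+1))} (fun _ => w)) := by
      constructor
      · intro i; exact hnw
      · intro i j hij
        exfalso
        apply hij
        have hi := i.2
        have hj := j.2
        simp only [Set.mem_singleton_iff] at hi hj
        exact Subtype.ext (hi.trans hj.symm)
    have hcard : Module.finrank ℂ (EuclideanSpace ℂ (Fin (n+1))) = Fintype.card (Fin (n+1)) := by
      simp
    obtain ⟨b, hb⟩ := hON.exists_orthonormalBasis_extension_of_card_eq hcard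
    have hb0 : b 0 = w := hb 0 rfl
    set U : Matrix (Fin (n+1)) (Fin (n+1)) ℂ := Matrix.of fun i j => (b j) i with hUdef
    have hU : Uᴴ * U = 1 := by
      ext i j
      have hinner := orthonormal_iff_ite.mp b.orthonormal i j
      rw [PiLp.inner_apply] at hinner
      simp only [Matrix.mul_apply, Matrix.conjTranspose_apply, hUdef, Matrix.of_apply,
        Matrix.one_apply]
      simpa [mul_comm] using hinner
    have hUU : U * Uᴴ = 1 := mul_eq_one_comm.mp hU
    have hUcol : ∀ l, U l 0 = c * v l := by
      intro l
      simp [hUdef, hb0, hw, hvEdef]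
    have hMU : ∀ k, (M * U) k 0 = μ * U k 0 := by
      intro k
      simp only [Matrix.mul_apply, hUcol]
      have h1 : ∑ l, M k l * (c * v l) = c * ∑ l, M k l * v l := by
        rw [Finset.mul_sum]; exact Finset.sum_congr rfl fun l _ => by ring
      rw [h1]
      have h2 : ∑ l, M k l * v l = (M *ᵥ v) k := rfl
      rw [h2, hMv]
      simp only [Pi.smul_apply, smul_eq_mul]
      ring
    set N : Matrix (Fin (n+1)) (Fin (n+1)) ℂ := Uᴴ * M * U with hNdef
    have hNcol : ∀ i : Fin (n+1), i ≠ 0 → N i 0 = 0 := by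
      intro i hi
      have h1 : N = Uᴴ * (M * U) := by rw [hNdef, Matrix.mul_assoc]
      rw [h1, Matrix.mul_apply]
      simp only [Matrix.conjTranspose_apply]
      have h2 : ∑ k, star (U k i) * (M * U) k 0 = μ * ∑ k, star (U k i) * U k 0 := by
        rw [Finset.mul_sum]
        exact Finset.sum_congr rfl fun k _ => by rw [hMU k]; ring
      rw [h2]
      have h3 : ∑ k, star (U k i) * U k 0 = (Uᴴ * U) i 0 := by
        simp [Matrix.mul_apply, Matrix.conjTranspose_apply]
      rw [h3, hU, Matrix.one_apply_ne hi, mul_zero]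
    -- block decomposition
    set e : Fin 1 ⊕ Fin n ≃ Fin (n+1) := finSumFinEquiv.trans (finCongr (Nat.add_comm 1 n)) with hedef
    have he0 : e (Sum.inl 0) = 0 := rfl
    have heS : ∀ k : Fin n, e (Sum.inr k) = Fin.succ k := by
      intro k
      apply Fin.ext
      simp [hedef, finSumFinEquiv, Fin.natAdd, Nat.add_comm]
    obtain ⟨U', T', hU', htri', hrep'⟩ := IH (Matrix.of fun i j => N (e (Sum.inr i)) (e (Sum.inr j)))
    have hUU' : U' * U'ᴴ = 1 := mul_eq_one_comm.mp hU'
    set R : Matrix (Fin 1) (Fin n) ℂ := Matrix.of fun _ j => N 0 (e (Sum.inr j)) with hRdef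
    set lb : Matrix (Fin 1) (Fin 1) ℂ := Matrix.of fun _ _ => N 0 0 with hlbdef
    have hNb : N.submatrix e e = fromBlocks lb R 0 (Matrix.of fun i j => N (e (Sum.inr i)) (e (Sum.inr j))) := by
      ext i j
      rcases i with i | i <;> rcases j with j | j <;>
        simp only [Matrix.submatrix_apply, Matrix.fromBlocks_apply₁₁, Matrix.fromBlocks_apply₁₂,
          Matrix.fromBlocks_apply₂₁, Matrix.fromBlocks_apply₂₂, Matrix.of_apply]
      · rw [Subsingleton.elim i 0, Subsingleton.elim j 0, he0, hlbdef]; rfl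
      · rw [Subsingleton.elim i 0, he0, hRdef]; rfl
      · rw [Subsingleton.elim j 0, he0]
        have : e (Sum.inr i) ≠ 0 := by rw [heS]; exact Fin.succ_ne_zero i
        simp [hNcol _ this]
    set Ub : Matrix (Fin 1 ⊕ Fin n) (Fin 1 ⊕ Fin n) ℂ := fromBlocks 1 0 0 U' with hUbdef
    set Tb : Matrix (Fin 1 ⊕ Fin n) (Fin 1 ⊕ Fin n) ℂ := fromBlocks lb (R * U') 0 T' with hTbdef
    have hUbU : Ubᴴ * Ub = 1 := by
      rw [hUbdef, Matrix.fromBlocks_conjTranspose, Matrix.fromBlocks_multiply]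
      simp [hU', Matrix.fromBlocks_one]
    have hrepNb : N.submatrix e e = Ub * Tb * Ubᴴ := by
      rw [hNb, hUbdef, hTbdef, Matrix.fromBlocks_conjTranspose, Matrix.fromBlocks_multiply,
        Matrix.fromBlocks_multiply]
      simp only [Matrix.one_mul, Matrix.mul_one, Matrix.zero_mul, Matrix.mul_zero,
        Matrix.conjTranspose_one, Matrix.conjTranspose_zero, add_zero, zero_add,
        Matrix.mul_assoc, hUU']
      rw [← Matrix.mul_assoc U' T' U'ᴴ, ← hrep']
    -- assemble
    set Y : Matrix (Fin (n+1)) (Fin (n+1)) ℂ := Ub.submatrix e.symm e.symm with hYdef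
    have hYc : Yᴴ = Ubᴴ.submatrix e.symm e.symm := by
      rw [hYdef, Matrix.conjTranspose_submatrix]
    have hYU : Yᴴ * Y = 1 := by
      rw [hYc, hYdef, Matrix.submatrix_mul_equiv Ubᴴ Ub _ e.symm _, hUbU,
        Matrix.submatrix_one_equiv]
    have hNrep : N = Y * (Tb.submatrix e.symm e.symm) * Yᴴ := by
      have h1 : N = (N.submatrix e e).submatrix e.symm e.symm := by
        rw [Matrix.submatrix_submatrix]
        have : (⇑e ∘ ⇑e.symm) = id := by
          funext x; simp
        rw [this, Matrix.submatrix_id_id]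
      rw [h1, hrepNb, hYc, hYdef]
      rw [← Matrix.submatrix_mul_equiv (Ub * Tb) Ubᴴ (⇑e.symm) e.symm (⇑e.symm),
        ← Matrix.submatrix_mul_equiv Ub Tb (⇑e.symm) e.symm (⇑e.symm)]
    refine ⟨U * Y, Tb.submatrix e.symm e.symm, ?_, ?_, ?_⟩
    · rw [Matrix.conjTranspose_mul, Matrix.mul_assoc, ← Matrix.mul_assoc Uᴴ U Y, hU,
        Matrix.one_mul, hYU]
    · intro i j hij
      simp only [Matrix.submatrix_apply]
      have hi' : e (e.symm i) = i := e.apply_symm_apply i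
      have hj' : e (e.symm j) = j := e.apply_symm_apply j
      rcases hsi : e.symm i with i1 | i2 <;> rcases hsj : e.symm j with j1 | j2
      · exfalso
        rw [hsi, Subsingleton.elim i1 0, he0] at hi'
        rw [← hi'] at hij
        simp at hij
      · exfalso
        rw [hsi, Subsingleton.elim i1 0, he0] at hi'
        rw [← hi'] at hij
        simp at hij
      · simp [hTbdef]
      · have h4 : T' i2 j2 = 0 := by
          apply htri'
          rw [hsi, heS] at hi'
          rw [hsj, heS] at hj'
          rw [← hi', ← hj'] at hij
          simpa using hij
        simp [hTbdef, h4]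
    · have hM : U * N * Uᴴ = M := by
        rw [hNdef]
        have h5 : U * (Uᴴ * M * U) * Uᴴ = (U * Uᴴ) * M * (U * Uᴴ) := by
          simp only [Matrix.mul_assoc]
        rw [h5, hUU, Matrix.one_mul, Matrix.mul_one]
      rw [← hM, hNrep, Matrix.conjTranspose_mul]
      simp only [Matrix.mul_assoc]

lemma root_multiset_eq {n : ℕ} (τ αu βv : Fin n → ℂ)
    (h : ∀ x : ℂ, x ≠ 0 →
      x ^ n * ∏ k, (x - τ k) = (∏ i, (x - αu i)) * ∏ j, (x - βv j)) :
    Multiset.replicate n 0 + Multiset.map τ Finset.univ.val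
      = Multiset.map αu Finset.univ.val + Multiset.map βv Finset.univ.val := by
  classical
  set p : ℂ[X] := X ^ n *
    ((Multiset.map τ Finset.univ.val).map (fun a => X - C a)).prod with hp
  set q : ℂ[X] := ((Multiset.map αu Finset.univ.val).map (fun a => X - C a)).prod *
    ((Multiset.map βv Finset.univ.val).map (fun a => X - C a)).prod with hq
  have hev : ∀ (f : Fin n → ℂ) (x : ℂ),
      (((Multiset.map f Finset.univ.val).map (fun a => X - C a)).prod).eval x
        = ∏ k, (x - f k) := by
    intro f x
    rw [Polynomial.eval_multiset_prod, Multiset.map_map, Multiset.map_map]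
    rw [Finset.prod_eq_multiset_prod]
    congr 1
    apply Multiset.map_congr rfl
    intro k _
    simp
  have hpq : p = q := by
    apply Polynomial.eq_of_infinite_eval_eq
    have hinf : ({(0 : ℂ)}ᶜ : Set ℂ).Infinite :=
      Set.Finite.infinite_compl (Set.finite_singleton 0)
    apply hinf.mono
    intro x hx
    have hx0 : x ≠ 0 := hx
    simp only [Set.mem_setOf_eq, hp, hq, Polynomial.eval_mul, Polynomial.eval_pow,
      Polynomial.eval_X]
    rw [hev τ x, hev αu x, hev βv x]
    exact h x hx0
  have hmonic : ∀ (f : Fin n → ℂ),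
      (((Multiset.map f Finset.univ.val).map (fun a => X - C a)).prod) ≠ 0 := by
    intro f
    apply Polynomial.Monic.ne_zero
    apply Polynomial.monic_multiset_prod_of_monic
    intro a _
    exact Polynomial.monic_X_sub_C a
  have hroots : p.roots = q.roots := by rw [hpq]
  rw [hp, hq] at hroots
  rw [Polynomial.roots_mul (mul_ne_zero (pow_ne_zero n Polynomial.X_ne_zero) (hmonic τ)),
    Polynomial.roots_mul (mul_ne_zero (hmonic αu) (hmonic βv)),
    Polynomial.roots_pow, Polynomial.roots_X,
    Polynomial.roots_multiset_prod_X_sub_C, Polynomial.roots_multiset_prod_X_sub_C,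
    Polynomial.roots_multiset_prod_X_sub_C] at hroots
  rw [← hroots]
  congr 1
  rw [Multiset.nsmul_singleton]

lemma sum_of_multiset_eq {n : ℕ} {τ αu βv : Fin n → ℂ}
    (hms : Multiset.replicate n 0 + Multiset.map τ Finset.univ.val
      = Multiset.map αu Finset.univ.val + Multiset.map βv Finset.univ.val)
    (h : ℂ → ℝ) (h0 : h 0 = 0) :
    ∑ k, h (τ k) = ∑ i, h (αu i) + ∑ j, h (βv j) := by
  have := congrArg (fun m : Multiset ℂ => (m.map h).sum) hms
  simp only [Multiset.map_add, Multiset.sum_add, Multiset.map_replicate, h0,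
    Multiset.sum_replicate, smul_zero, zero_add, Multiset.map_map] at this
  rw [Finset.sum_eq_multiset_sum, Finset.sum_eq_multiset_sum, Finset.sum_eq_multiset_sum]
  simpa using this

-- extra small helpers

lemma unitary_conj_inj {n : ℕ} {U X Y : Matrix (Fin n) (Fin n) ℂ} (hU : Uᴴ * U = 1)
    (h : U * X * Uᴴ = U * Y * Uᴴ) : X = Y := by
  have key : ∀ Z : Matrix (Fin n) (Fin n) ℂ, Uᴴ * (U * Z * Uᴴ) * U = Z := by
    intro Z
    have h1 : Uᴴ * (U * Z * Uᴴ) * U = (Uᴴ * U) * Z * (Uᴴ * U) := by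
      simp only [Matrix.mul_assoc]
    rw [h1, hU, Matrix.one_mul, Matrix.mul_one]
  rw [← key X, h, key Y]

lemma eq_diagonal_of_offdiag_zero {n : ℕ} {T : Matrix (Fin n) (Fin n) ℂ}
    (hd : ∀ i j : Fin n, i ≠ j → T i j = 0) :
    T = Matrix.diagonal (fun i => T i i) := by
  ext i j
  by_cases h : i = j
  · subst h; simp
  · rw [Matrix.diagonal_apply_ne _ h, hd i j h]

lemma diag_normal {n : ℕ} {T : Matrix (Fin n) (Fin n) ℂ}
    (hd : ∀ i j : Fin n, i ≠ j → T i j = 0) : T * Tᴴ = Tᴴ * T := by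
  rw [eq_diagonal_of_offdiag_zero hd, Matrix.diagonal_conjTranspose,
    Matrix.diagonal_mul_diagonal, Matrix.diagonal_mul_diagonal]
  apply congrArg
  funext i
  exact mul_comm _ _

lemma frob_offdiag {n : ℕ} {T : Matrix (Fin n) (Fin n) ℂ}
    (h : ∑ i, ∑ j, Complex.normSq (T i j) = ∑ i, Complex.normSq (T i i)) :
    ∀ i j : Fin n, i ≠ j → T i j = 0 := by
  have hle : ∀ i : Fin n, Complex.normSq (T i i) ≤ ∑ j, Complex.normSq (T i j) :=
    fun i => Finset.single_le_sum (fun j _ => Complex.normSq_nonneg _) (Finset.mem_univ i)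
  have hrows : ∀ i : Fin n, ∑ j, Complex.normSq (T i j) = Complex.normSq (T i i) := by
    by_contra hcon
    push_neg at hcon
    obtain ⟨i0, hi0⟩ := hcon
    have hlt : Complex.normSq (T i0 i0) < ∑ j, Complex.normSq (T i0 j) :=
      lt_of_le_of_ne (hle i0) (Ne.symm hi0)
    have : ∑ i, Complex.normSq (T i i) < ∑ i, ∑ j, Complex.normSq (T i j) := by
      apply Finset.sum_lt_sum (fun i _ => hle i)
      exact ⟨i0, Finset.mem_univ i0, hlt⟩
    linarith
  intro i j hij
  have h1 := hrows i
  have h2 : ∑ k ∈ Finset.univ.erase i, Complex.normSq (T i k) = 0 := by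
    have := Finset.add_sum_erase Finset.univ (fun k => Complex.normSq (T i k))
      (Finset.mem_univ i)
    linarith
  have hj : j ∈ Finset.univ.erase i := Finset.mem_erase.mpr ⟨fun h => hij h.symm, Finset.mem_univ j⟩
  have := (Finset.sum_eq_zero_iff_of_nonneg
    (fun k _ => Complex.normSq_nonneg (T i k))).mp h2 j hj
  exact Complex.normSq_eq_zero.mp this

lemma frob_diag_sum {n : ℕ} {T : Matrix (Fin n) (Fin n) ℂ}
    (hd : ∀ i j : Fin n, i ≠ j → T i j = 0) :
    ∑ i, ∑ j, Complex.normSq (T i j) = ∑ i, Complex.normSq (T i i) := by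
  refine Finset.sum_congr rfl fun i _ => ?_
  rw [Finset.sum_eq_single i]
  · intro k _ hk
    rw [hd i k (fun h => hk h.symm), Complex.normSq_zero]
  · intro h; exact absurd (Finset.mem_univ i) h

lemma frob_sum_sq_diag {n : ℕ} {T : Matrix (Fin n) (Fin n) ℂ}
    (hd : ∀ i j : Fin n, i ≠ j → T i j = 0) :
    ∑ i, ∑ j, Complex.normSq ((T * T) i j) = ∑ i, (Complex.normSq (T i i))^2 := by
  obtain ⟨d, hTd⟩ : ∃ d, T = Matrix.diagonal d := ⟨_, eq_diagonal_of_offdiag_zero hd⟩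
  have hdd : ∀ i, d i = T i i := by intro i; rw [hTd]; simp
  rw [hTd, Matrix.diagonal_mul_diagonal]
  have hoff : ∀ i j : Fin n, i ≠ j → (Matrix.diagonal (fun i => d i * d i)) i j = 0 :=
    fun i j hij => Matrix.diagonal_apply_ne _ hij
  rw [frob_diag_sum hoff]
  refine Finset.sum_congr rfl fun i _ => ?_
  simp [hdd i, Complex.normSq_mul, sq]

set_option maxHeartbeats 1000000 in
theorem stmt18 (n : ℕ) (A B : Matrix (Fin n) (Fin n) ℂ)
    (hA : A * Aᴴ = Aᴴ * A) (hB : B * Bᴴ = Bᴴ * B) :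
    (∀ s t : ℂ, (1 - s • A - t • B).det = (1 - s • A).det * (1 - t • B).det) ↔
    A * B = 0 := by
  constructor
  · intro H
    -- Schur triangulations of A and B; normality makes them diagonal
    obtain ⟨UA, TA, hUA, htriA, hrepA⟩ := schur_tri n A
    obtain ⟨UB, TB, hUB, htriB, hrepB⟩ := schur_tri n B
    have hrepAH : Aᴴ = UA * TAᴴ * UAᴴ := by
      rw [hrepA]
      simp only [Matrix.conjTranspose_mul, Matrix.conjTranspose_conjTranspose,
        Matrix.mul_assoc]
    have hTAn : TA * TAᴴ = TAᴴ * TA := by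
      apply unitary_conj_inj hUA
      have h1 := conj_mul_conjT hUA hrepA
      have h2 := conj_mul_conjT hUA hrepAH (T := TAᴴ)
      simp only [Matrix.conjTranspose_conjTranspose] at h2
      rw [← h1, ← h2]
      exact hA
    have hrepBH : Bᴴ = UB * TBᴴ * UBᴴ := by
      rw [hrepB]
      simp only [Matrix.conjTranspose_mul, Matrix.conjTranspose_conjTranspose,
        Matrix.mul_assoc]
    have hTBn : TB * TBᴴ = TBᴴ * TB := by
      apply unitary_conj_inj hUB
      have h1 := conj_mul_conjT hUB hrepB
      have h2 := conj_mul_conjT hUB hrepBH (T := TBᴴ)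
      simp only [Matrix.conjTranspose_conjTranspose] at h2
      rw [← h1, ← h2]
      exact hB
    have hdA : ∀ i j : Fin n, i ≠ j → TA i j = 0 := tri_normal_diag htriA hTAn
    have hdB : ∀ i j : Fin n, i ≠ j → TB i j = 0 := tri_normal_diag htriB hTBn
    -- determinant formulas
    have hdetA : ∀ s : ℂ, (1 - s • A).det = ∏ i, (1 - s * TA i i) :=
      det_one_sub_smul_tri hUA hrepA htriA
    have hdetB : ∀ t : ℂ, (1 - t • B).det = ∏ i, (1 - t * TB i i) :=
      det_one_sub_smul_tri hUB hrepB htriB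
    -- KEY: the Schur data of u•A+v•B, with eigenvalue multiset identity
    have KEY : ∀ u v : ℂ, ∃ U T : Matrix (Fin n) (Fin n) ℂ,
        Uᴴ * U = 1 ∧ (∀ i j : Fin n, (j : ℕ) < (i : ℕ) → T i j = 0) ∧
        (u • A + v • B = U * T * Uᴴ) ∧
        (Multiset.replicate n 0 + Multiset.map (fun k => T k k) Finset.univ.val
          = Multiset.map (fun i => u * TA i i) Finset.univ.val
            + Multiset.map (fun j => v * TB j j) Finset.univ.val) := by
      intro u v
      obtain ⟨U, T, hU, htri, hrep⟩ := schur_tri n (u • A + v • B)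
      refine ⟨U, T, hU, htri, hrep, ?_⟩
      apply root_multiset_eq
      intro x hx
      have h1 : x • (1 : Matrix (Fin n) (Fin n) ℂ) - (u • A + v • B)
          = x • (1 - (x⁻¹ * u) • A - (x⁻¹ * v) • B) := by
        rw [smul_sub, smul_sub, smul_smul, smul_smul]
        rw [mul_comm x (x⁻¹ * u), mul_comm x (x⁻¹ * v)]
        field_simp
        abel
      have h2 : (x • (1 : Matrix (Fin n) (Fin n) ℂ) - (u • A + v • B)).det
          = ∏ k, (x - T k k) := det_smul_one_sub_tri hU hrep htri x
      have h3 : (x • (1 - (x⁻¹ * u) • A - (x⁻¹ * v) • B)).det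
          = x ^ n * ((1 - (x⁻¹ * u) • A - (x⁻¹ * v) • B)).det := by
        rw [Matrix.det_smul, Fintype.card_fin]
      have h4 := H (x⁻¹ * u) (x⁻¹ * v)
      have h5 : ∀ (c : ℂ) (γ : Fin n → ℂ),
          x ^ n * ∏ i, (1 - (x⁻¹ * c) * γ i) = ∏ i, (x - c * γ i) := by
        intro c γ
        rw [show (x : ℂ) ^ n = ∏ _i : Fin n, x by
          rw [Finset.prod_const, Finset.card_univ, Fintype.card_fin]]
        rw [← Finset.prod_mul_distrib]
        refine Finset.prod_congr rfl fun i _ => ?_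
        field_simp
      calc x ^ n * ∏ k, (x - T k k)
          = x ^ n * (x • (1 : Matrix (Fin n) (Fin n) ℂ) - (u • A + v • B)).det := by rw [h2]
        _ = x ^ n * (x ^ n * ((1 - (x⁻¹ * u) • A - (x⁻¹ * v) • B)).det) := by rw [h1, h3]
        _ = x ^ n * (x ^ n * ((1 - (x⁻¹ * u) • A).det * (1 - (x⁻¹ * v) • B).det)) := by
            rw [h4]
        _ = (x ^ n * ∏ i, (1 - (x⁻¹ * u) * TA i i)) * (x ^ n * ∏ i, (1 - (x⁻¹ * v) * TB i i)) := by
            rw [hdetA, hdetB]; ring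
        _ = (∏ i, (x - u * TA i i)) * ∏ j, (x - v * TB j j) := by rw [h5, h5]
    -- second-order analysis
    have htrA : (A * Aᴴ).trace = ((∑ i, Complex.normSq (TA i i) : ℝ) : ℂ) := by
      rw [conj_mul_conjT hUA hrepA, trace_unitary_conj hUA, frob]
      rw [frob_diag_sum hdA]
    have htrB : (B * Bᴴ).trace = ((∑ i, Complex.normSq (TB i i) : ℝ) : ℂ) := by
      rw [conj_mul_conjT hUB hrepB, trace_unitary_conj hUB, frob]
      rw [frob_diag_sum hdB]
    have hexp2 : ∀ u v : ℂ, ((u • A + v • B) * (u • A + v • B)ᴴ).trace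
        = (u * star u) * (A * Aᴴ).trace + (v * star v) * (B * Bᴴ).trace
          + (u * star v) * (A * Bᴴ).trace + (star u * v) * (B * Aᴴ).trace := by
      intro u v
      rw [Matrix.conjTranspose_add, Matrix.conjTranspose_smul, Matrix.conjTranspose_smul]
      simp only [Matrix.mul_add, Matrix.add_mul, Matrix.smul_mul, Matrix.mul_smul,
        smul_smul, Matrix.trace_add, Matrix.trace_smul, smul_eq_mul]
      ring
    have hcross : (B * Aᴴ).trace = star ((A * Bᴴ).trace) := by
      rw [← Matrix.trace_conjTranspose]
      congr 1
      rw [Matrix.conjTranspose_mul, Matrix.conjTranspose_conjTranspose]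
    have step1 : ∀ u v : ℂ, ∃ d : ℝ, 0 ≤ d ∧
        ((d : ℝ) : ℂ) = (u * star v) * (A * Bᴴ).trace
          + (star u * v) * star ((A * Bᴴ).trace) := by
      intro u v
      obtain ⟨U, T, hU, htri, hrep, hms⟩ := KEY u v
      have hsum2 := sum_of_multiset_eq hms Complex.normSq Complex.normSq_zero
      simp only [Complex.normSq_mul] at hsum2
      rw [← Finset.mul_sum, ← Finset.mul_sum] at hsum2
      have hMM : ((u • A + v • B) * (u • A + v • B)ᴴ).trace
          = ((∑ i, ∑ j, Complex.normSq (T i j) : ℝ) : ℂ) := by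
        rw [conj_mul_conjT hU hrep, trace_unitary_conj hU, frob]
      refine ⟨(∑ i, ∑ j, Complex.normSq (T i j))
        - (Complex.normSq u * ∑ i, Complex.normSq (TA i i)
           + Complex.normSq v * ∑ i, Complex.normSq (TB i i)), ?_, ?_⟩
      · rw [← hsum2]
        have h1 : ∀ i : Fin n, Complex.normSq (T i i) ≤ ∑ j, Complex.normSq (T i j) :=
          fun i => Finset.single_le_sum (fun j _ => Complex.normSq_nonneg _) (Finset.mem_univ i)
        have h2 : ∑ i, Complex.normSq (T i i) ≤ ∑ i, ∑ j, Complex.normSq (T i j) :=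
          Finset.sum_le_sum (fun i _ => h1 i)
        linarith
      · have hnu : ((Complex.normSq u : ℝ) : ℂ) = u * star u := by
          rw [Complex.normSq_eq_conj_mul_self, Complex.star_def]; ring
        have hnv : ((Complex.normSq v : ℝ) : ℂ) = v * star v := by
          rw [Complex.normSq_eq_conj_mul_self, Complex.star_def]; ring
        rw [Complex.ofReal_sub, ← hMM, hexp2 u v, hcross, htrA, htrB]
        push_cast
        rw [hnu, hnv]
        ring
    have ht0 : (A * Bᴴ).trace = 0 := by
      obtain ⟨d, hd0, hdeq⟩ := step1 1 (-(A * Bᴴ).trace)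
      simp only [one_mul, star_one, star_neg, neg_mul, mul_neg] at hdeq
      have h1 : ((d : ℝ) : ℂ) = ((-2 * Complex.normSq ((A * Bᴴ).trace) : ℝ) : ℂ) := by
        rw [hdeq]
        push_cast [Complex.normSq_eq_conj_mul_self]
        rw [Complex.star_def]
        ring
      have h2 : d = -2 * Complex.normSq ((A * Bᴴ).trace) := Complex.ofReal_inj.mp h1
      have h3 := Complex.normSq_nonneg ((A * Bᴴ).trace)
      have h4 : Complex.normSq ((A * Bᴴ).trace) = 0 := by linarith [h2 ▸ hd0]
      exact Complex.normSq_eq_zero.mp h4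
    -- every u•A+v•B is unitarily diagonalizable
    have step2 : ∀ u v : ℂ, ∃ U T : Matrix (Fin n) (Fin n) ℂ,
        Uᴴ * U = 1 ∧ (u • A + v • B = U * T * Uᴴ) ∧ (∀ i j : Fin n, i ≠ j → T i j = 0) ∧
        (Multiset.replicate n 0 + Multiset.map (fun k => T k k) Finset.univ.val
          = Multiset.map (fun i => u * TA i i) Finset.univ.val
            + Multiset.map (fun j => v * TB j j) Finset.univ.val) := by
      intro u v
      obtain ⟨U, T, hU, htri, hrep, hms⟩ := KEY u v
      refine ⟨U, T, hU, hrep, ?_, hms⟩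
      have hsum2 := sum_of_multiset_eq hms Complex.normSq Complex.normSq_zero
      simp only [Complex.normSq_mul] at hsum2
      rw [← Finset.mul_sum, ← Finset.mul_sum] at hsum2
      have hMM : ((u • A + v • B) * (u • A + v • B)ᴴ).trace
          = ((∑ i, ∑ j, Complex.normSq (T i j) : ℝ) : ℂ) := by
        rw [conj_mul_conjT hU hrep, trace_unitary_conj hU, frob]
      have hnu : ((Complex.normSq u : ℝ) : ℂ) = u * star u := by
        rw [Complex.normSq_eq_conj_mul_self, Complex.star_def]; ring
      have hnv : ((Complex.normSq v : ℝ) : ℂ) = v * star v := by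
        rw [Complex.normSq_eq_conj_mul_self, Complex.star_def]; ring
      have hzero : ((∑ i, ∑ j, Complex.normSq (T i j) : ℝ) : ℂ)
          = ((∑ i, Complex.normSq (T i i) : ℝ) : ℂ) := by
        rw [← hMM, hexp2 u v, hcross, htrA, htrB, ht0, hsum2]
        simp only [star_zero, mul_zero, zero_mul, add_zero]
        push_cast
        rw [hnu, hnv]
      apply frob_offdiag
      exact_mod_cast hzero
    -- normality of all combinations
    have Mnormal : ∀ u v : ℂ, (u • A + v • B) * (u • A + v • B)ᴴ
        = (u • A + v • B)ᴴ * (u • A + v • B) := by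
      intro u v
      obtain ⟨U, T, hU, hrep, hdg, _⟩ := step2 u v
      have hrepH : (u • A + v • B)ᴴ = U * Tᴴ * Uᴴ := by
        rw [hrep]
        simp only [Matrix.conjTranspose_mul, Matrix.conjTranspose_conjTranspose,
          Matrix.mul_assoc]
      have h1 := conj_mul_conjT hU hrep
      have h2 := conj_mul_conjT hU hrepH (T := Tᴴ)
      simp only [Matrix.conjTranspose_conjTranspose] at h2
      rw [h1, h2, diag_normal hdg]
    -- the commutation relation A*Bᴴ = Bᴴ*A
    have he1 : A * Aᴴ + (A * Bᴴ + (B * Aᴴ + B * Bᴴ))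
        = Aᴴ * A + (Aᴴ * B + (Bᴴ * A + Bᴴ * B)) := by
      have h := Mnormal 1 1
      simp only [one_smul, Matrix.conjTranspose_add, Matrix.mul_add, Matrix.add_mul] at h
      linear_combination (norm := module) h
    have hni : Complex.I • (A * Aᴴ) + (A * Bᴴ + (-(B * Aᴴ) + Complex.I • (B * Bᴴ)))
        = Complex.I • (Aᴴ * A) + (-(Aᴴ * B) + (Bᴴ * A + Complex.I • (Bᴴ * B))) := by
      have h := Mnormal 1 Complex.I
      simp only [one_smul, Matrix.conjTranspose_add, Matrix.conjTranspose_smul,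
        Complex.star_def, Complex.conj_I, neg_smul, Matrix.mul_add, Matrix.add_mul,
        Matrix.smul_mul, Matrix.mul_smul, smul_smul, Matrix.mul_neg, Matrix.neg_mul,
        smul_neg, neg_neg, Complex.I_mul_I, neg_smul, one_smul] at h
      have h2 := congrArg (fun X => Complex.I • X) h
      simp only [smul_add, smul_neg, smul_smul, Complex.I_mul_I, neg_smul, one_smul,
        neg_neg] at h2
      linear_combination (norm := module) h2
    have rel1 : A * Bᴴ = Bᴴ * A := by
      have hcomb := congrArg₂ (fun X Y => X + Y) he1 hni
      -- (he1 + hni) : I•AAᴴ-terms cancel via hA hB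
      have hAI := congrArg (fun X => Complex.I • X) hA
      have hBI := congrArg (fun X => Complex.I • X) hB
      linear_combination (norm := module) (((1:ℂ)/2) : ℂ) • he1 + ((1:ℂ)/2) • hni
        - ((1:ℂ)/2) • hA - ((1:ℂ)/2) • hB - ((1:ℂ)/2) • hAI - ((1:ℂ)/2) • hBI
    -- fourth-order analysis
    have htrA4 : ((A * A) * (A * A)ᴴ).trace
        = ((∑ i, (Complex.normSq (TA i i))^2 : ℝ) : ℂ) := by
      have hA2 : A * A = UA * (TA * TA) * UAᴴ := mul_self_conj hUA hrepA
      rw [conj_mul_conjT hUA hA2, trace_unitary_conj hUA, frob, frob_sum_sq_diag hdA]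
    have htrB4 : ((B * B) * (B * B)ᴴ).trace
        = ((∑ i, (Complex.normSq (TB i i))^2 : ℝ) : ℂ) := by
      have hB2 : B * B = UB * (TB * TB) * UBᴴ := mul_self_conj hUB hrepB
      rw [conj_mul_conjT hUB hB2, trace_unitary_conj hUB, frob, frob_sum_sq_diag hdB]
    have G : ∀ v : ℂ, (((A + v • B) * (A + v • B)) * ((A + v • B) * (A + v • B))ᴴ).trace
        = ((∑ i, (Complex.normSq (TA i i))^2 : ℝ) : ℂ)
          + (v * star v)^2 * ((∑ i, (Complex.normSq (TB i i))^2 : ℝ) : ℂ) := by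
      intro v
      obtain ⟨U, T, hU, hrep, hdg, hms⟩ := step2 1 v
      rw [one_smul] at hrep
      simp only [one_mul] at hms
      have hM2 : (A + v • B) * (A + v • B) = U * (T * T) * Uᴴ := mul_self_conj hU hrep
      rw [conj_mul_conjT hU hM2, trace_unitary_conj hU, frob, frob_sum_sq_diag hdg]
      have hsum4 := sum_of_multiset_eq hms (fun z => (Complex.normSq z)^2) (by simp)
      simp only [Complex.normSq_mul, mul_pow] at hsum4
      rw [← Finset.mul_sum] at hsum4
      rw [hsum4]
      have hnv : ((Complex.normSq v : ℝ) : ℂ) = v * star v := by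
        rw [Complex.normSq_eq_conj_mul_self, Complex.star_def]; ring
      push_cast
      rw [hnv]
    have Gexp : ∀ v : ℂ,
        (((A + v • B) * (A + v • B)) * ((A + v • B) * (A + v • B))ᴴ).trace
        = ((A*A) * (A*A)ᴴ).trace + star v * ((A*A) * (A*B + B*A)ᴴ).trace
          + (star v * star v) * ((A*A) * (B*B)ᴴ).trace
          + v * ((A*B + B*A) * (A*A)ᴴ).trace
          + (v * star v) * ((A*B + B*A) * (A*B + B*A)ᴴ).trace
          + (v * star v * star v) * ((A*B + B*A) * (B*B)ᴴ).trace
          + (v*v) * ((B*B) * (A*A)ᴴ).trace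
          + (v*v*star v) * ((B*B) * (A*B + B*A)ᴴ).trace
          + (v*v*star v*star v) * ((B*B) * (B*B)ᴴ).trace := by
      intro v
      have hsq : (A + v • B) * (A + v • B) = A*A + v • (A*B + B*A) + (v*v) • (B*B) := by
        simp only [Matrix.mul_add, Matrix.add_mul, Matrix.smul_mul, Matrix.mul_smul,
          smul_smul, smul_add]
        module
      rw [hsq]
      rw [Matrix.conjTranspose_add, Matrix.conjTranspose_add, Matrix.conjTranspose_smul,
        Matrix.conjTranspose_smul]
      simp only [Matrix.mul_add, Matrix.add_mul, Matrix.smul_mul, Matrix.mul_smul,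
        smul_smul, Matrix.trace_add, Matrix.trace_smul, smul_eq_mul, star_mul']
      ring
    have E1 := (Gexp 1).symm.trans (G 1)
    have Em1 := (Gexp (-1)).symm.trans (G (-1))
    have EI := (Gexp Complex.I).symm.trans (G Complex.I)
    have EmI := (Gexp (-Complex.I)).symm.trans (G (-Complex.I))
    simp only [star_one, one_mul, mul_one, star_neg, neg_mul, mul_neg, neg_neg,
      Complex.star_def, Complex.conj_I, Complex.I_mul_I, _root_.map_one, map_neg, one_pow] at E1 Em1 EI EmI
    have ht11 : ((A*B + B*A) * (A*B + B*A)ᴴ).trace = 0 := by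
      linear_combination ((1:ℂ)/4) * E1 + ((1:ℂ)/4) * Em1 + ((1:ℂ)/4) * EI
        + ((1:ℂ)/4) * EmI - htrA4 - htrB4
    have hX1zero : A*B + B*A = 0 := frob_zero ht11
    have hABBA : A * B = -(B * A) := eq_neg_of_add_eq_zero_left hX1zero
    have hkey : (A*B) * (A*B)ᴴ = -((B*Bᴴ) * (A*Aᴴ)) := by
      rw [Matrix.conjTranspose_mul]
      calc (A*B) * (Bᴴ*Aᴴ) = (-(B*A)) * (Bᴴ*Aᴴ) := by rw [← hABBA]
      _ = -(B * (A*Bᴴ) * Aᴴ) := by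
          rw [Matrix.neg_mul]
          congr 1
          simp only [Matrix.mul_assoc]
      _ = -(B * (Bᴴ*A) * Aᴴ) := by rw [rel1]
      _ = -((B*Bᴴ) * (A*Aᴴ)) := by
          congr 1
          simp only [Matrix.mul_assoc]
    have htr1 : ((A*B) * (A*B)ᴴ).trace = -(((Bᴴ*A) * (Bᴴ*A)ᴴ).trace) := by
      rw [hkey, Matrix.trace_neg]
      congr 1
      rw [Matrix.conjTranspose_mul, Matrix.conjTranspose_conjTranspose]
      have h1 : (B*Bᴴ) * (A*Aᴴ) = B * (Bᴴ*(A*Aᴴ)) := by simp only [Matrix.mul_assoc]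
      rw [h1, Matrix.trace_mul_comm]
      congr 1
      simp only [Matrix.mul_assoc]
    rw [frob, frob] at htr1
    have htr1' : (∑ i, ∑ j, Complex.normSq ((A*B) i j) : ℝ)
        = -(∑ i, ∑ j, Complex.normSq ((Bᴴ*A) i j) : ℝ) := by exact_mod_cast htr1
    have hs1 : (0:ℝ) ≤ ∑ i, ∑ j, Complex.normSq ((A*B) i j) :=
      Finset.sum_nonneg fun i _ => Finset.sum_nonneg fun j _ => Complex.normSq_nonneg _
    have hs2 : (0:ℝ) ≤ ∑ i, ∑ j, Complex.normSq ((Bᴴ*A) i j) :=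
      Finset.sum_nonneg fun i _ => Finset.sum_nonneg fun j _ => Complex.normSq_nonneg _
    have hS0 : (∑ i, ∑ j, Complex.normSq ((A*B) i j) : ℝ) = 0 := by linarith
    apply frob_zero
    rw [frob, hS0]
    simp
  · intro hAB s t
    have h1 : (1 - s • A) * (1 - t • B) = 1 - s • A - t • B := by
      have h2 : (s • A) * (t • B) = (0 : Matrix (Fin n) (Fin n) ℂ) := by
        rw [Matrix.smul_mul, Matrix.mul_smul, hAB]
        simp
      rw [Matrix.sub_mul, Matrix.mul_sub, Matrix.mul_sub, h2]
      simp only [Matrix.one_mul, Matrix.mul_one, sub_zero]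
      abel
    rw [← h1, Matrix.det_mul]
end
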